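/- The seminorm f ↦ sup_{z ∈ G} v(z)|f(z)| on the space H^∞_v(G) of holomorphic functions f on G with sup_{z∈G} v(z)|f(z)| < ∞ is a norm if and only if the set E_v = {z ∈ G : v(z) > 0} has an accumulation point in G. -/

import Mathlib

open Complex Metric Set Filter Topology MeasureTheory

noncomputable section

/-- `f` is holomorphic on `G` and `sup_{z in G} v z * |f z| < ∞`. -/
def MemHv (G : Set ℂ) (v : ℂ → ℝ) (f : ℂ → ℂ) : Prop :=
  DifferentiableOn ℂ f G ∧ ∃ C : ℝ, ∀ z ∈ G, v z * ‖f z‖ ≤ C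

/-- The weighted sup-seminorm `‖f‖_v`. -/
def HvNorm (G : Set ℂ) (v : ℂ → ℝ) (f : ℂ → ℂ) : ℝ :=
  sSup ((fun z => v z * ‖f z‖) '' G)

/-- A `‖·‖_v`-Cauchy sequence. -/
def HvCauchy (G : Set ℂ) (v : ℂ → ℝ) (F : ℕ → ℂ → ℂ) : Prop :=
  ∀ ε : ℝ, 0 < ε → ∃ N : ℕ, ∀ m ≥ N, ∀ n ≥ N, ∀ z ∈ G,
    v z * ‖F m z - F n z‖ ≤ ε

/-- Convergence in the `‖·‖_v`-seminorm. -/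
def HvTendsto (G : Set ℂ) (v : ℂ → ℝ) (F : ℕ → ℂ → ℂ) (f : ℂ → ℂ) : Prop :=
  ∀ ε : ℝ, 0 < ε → ∃ N : ℕ, ∀ n ≥ N, ∀ z ∈ G,
    v z * ‖F n z - f z‖ ≤ ε

/-- Completeness of `H^∞_v(G)`: every Cauchy sequence converges in the space. -/
def HvComplete (G : Set ℂ) (v : ℂ → ℝ) : Prop :=
  ∀ F : ℕ → ℂ → ℂ, (∀ n, MemHv G v (F n)) → HvCauchy G v F →
    ∃ f : ℂ → ℂ, MemHv G v f ∧ HvTendsto G v F f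

/-- The seminorm `‖·‖_v` is a norm: `‖f‖_v = 0` forces `f = 0` on `G`. -/
def HvNormed (G : Set ℂ) (v : ℂ → ℝ) : Prop :=
  ∀ f : ℂ → ℂ, MemHv G v f → (∀ z ∈ G, v z * ‖f z‖ = 0) →
    ∀ z ∈ G, f z = 0

/-- `H^∞_v(G)` is a Banach space. -/
def IsBanachHv (G : Set ℂ) (v : ℂ → ℝ) : Prop :=
  HvNormed G v ∧ HvComplete G v

lemma prod_one_sub_sub_one_norm_le (s : Finset ℕ) (u : ℕ → ℂ) :
    ‖(∏ n ∈ s, (1 - u n)) - 1‖ ≤ Real.exp (∑ n ∈ s, ‖u n‖) - 1 := by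
  induction s using Finset.cons_induction with
  | empty => simp
  | cons a s ha ih =>
    rw [Finset.prod_cons, Finset.sum_cons]
    have hP : ‖∏ n ∈ s, (1 - u n)‖ ≤ Real.exp (∑ n ∈ s, ‖u n‖) := by
      have := norm_sub_norm_le (∏ n ∈ s, (1 - u n)) 1
      simp only [norm_one] at this
      linarith [ih]
    have h1 : (1 - u a) * ∏ n ∈ s, (1 - u n) - 1
        = ((∏ n ∈ s, (1 - u n)) - 1) + (- u a) * ∏ n ∈ s, (1 - u n) := by ring
    rw [h1]
    calc ‖((∏ n ∈ s, (1 - u n)) - 1) + (- u a) * ∏ n ∈ s, (1 - u n)‖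
        ≤ ‖(∏ n ∈ s, (1 - u n)) - 1‖ + ‖u a‖ * ‖∏ n ∈ s, (1 - u n)‖ := by
          calc ‖((∏ n ∈ s, (1 - u n)) - 1) + (- u a) * ∏ n ∈ s, (1 - u n)‖
              ≤ ‖(∏ n ∈ s, (1 - u n)) - 1‖ + ‖(- u a) * ∏ n ∈ s, (1 - u n)‖ :=
                norm_add_le _ _
            _ = ‖(∏ n ∈ s, (1 - u n)) - 1‖ + ‖u a‖ * ‖∏ n ∈ s, (1 - u n)‖ := by
                rw [norm_mul, norm_neg]
      _ ≤ (Real.exp (∑ n ∈ s, ‖u n‖) - 1) + ‖u a‖ * Real.exp (∑ n ∈ s, ‖u n‖) := by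
          gcongr
      _ ≤ Real.exp (‖u a‖ + ∑ n ∈ s, ‖u n‖) - 1 := by
          rw [Real.exp_add]
          nlinarith [Real.add_one_le_exp ‖u a‖, Real.exp_pos (∑ n ∈ s, ‖u n‖),
            norm_nonneg (u a)]

lemma norm_prod_one_sub_le (s : Finset ℕ) (u : ℕ → ℂ) :
    ‖∏ n ∈ s, (1 - u n)‖ ≤ Real.exp (∑ n ∈ s, ‖u n‖) := by
  have := norm_sub_norm_le (∏ n ∈ s, (1 - u n)) 1
  simp only [norm_one] at this
  linarith [prod_one_sub_sub_one_norm_le s u]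

lemma uniformCauchy_prod_one_sub {K : Set ℂ} {u : ℕ → ℂ → ℂ} {q : ℕ → ℝ}
    (hq : Summable q) (hq0 : ∀ n, 0 ≤ q n) (hb : ∀ n, ∀ z ∈ K, ‖u n z‖ ≤ q n) :
    UniformCauchySeqOn (fun N z => ∏ n ∈ Finset.range N, (1 - u n z)) atTop K := by
  rw [Metric.uniformCauchySeqOn_iff]
  intro ε hε
  set Q := ∑' n, q n with hQ
  have hsle : ∀ N, ∑ n ∈ Finset.range N, q n ≤ Q := fun N => hq.sum_le_tsum _ (fun n _ => hq0 n)
  have htend : Tendsto (fun N => Real.exp Q * (Real.exp (Q - ∑ n ∈ Finset.range N, q n) - 1))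
      atTop (𝓝 (Real.exp Q * (Real.exp 0 - 1))) :=
    Tendsto.const_mul _ (Tendsto.sub_const ((Real.continuous_exp.tendsto 0).comp
      (by simpa [hQ] using ((tendsto_const_nhds (x := Q)).sub hq.hasSum.tendsto_sum_nat))) _)
  simp only [Real.exp_zero, sub_self, mul_zero] at htend
  obtain ⟨N, hN⟩ := (htend.eventually (gt_mem_nhds hε)).exists
  -- key two-sided estimate
  have key : ∀ m n, N ≤ m → m ≤ n → ∀ z ∈ K,
      dist ((fun N z => ∏ k ∈ Finset.range N, (1 - u k z)) m z)
        ((fun N z => ∏ k ∈ Finset.range N, (1 - u k z)) n z) < ε := by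
    intro m n hNm hmn z hz
    simp only
    rw [dist_eq_norm]
    have hsplit : (∏ k ∈ Finset.range n, (1 - u k z))
        = (∏ k ∈ Finset.range m, (1 - u k z)) * ∏ k ∈ Finset.Ico m n, (1 - u k z) := by
      rw [Finset.prod_range_mul_prod_Ico _ hmn]
    have : (∏ k ∈ Finset.range m, (1 - u k z)) - (∏ k ∈ Finset.range n, (1 - u k z))
        = -((∏ k ∈ Finset.range m, (1 - u k z)) * ((∏ k ∈ Finset.Ico m n, (1 - u k z)) - 1)) := by
      rw [hsplit]; ring
    rw [this, norm_neg, norm_mul]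
    have h1 : ‖∏ k ∈ Finset.range m, (1 - u k z)‖ ≤ Real.exp Q := by
      refine (norm_prod_one_sub_le _ _).trans (Real.exp_le_exp.mpr ?_)
      exact le_trans (Finset.sum_le_sum fun k _ => hb k z hz) (hsle m)
    have h2 : ‖(∏ k ∈ Finset.Ico m n, (1 - u k z)) - 1‖
        ≤ Real.exp (Q - ∑ k ∈ Finset.range N, q k) - 1 := by
      refine (prod_one_sub_sub_one_norm_le _ _).trans ?_
      have : ∑ k ∈ Finset.Ico m n, ‖u k z‖ ≤ Q - ∑ k ∈ Finset.range N, q k := by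
        have e1 : ∑ k ∈ Finset.Ico m n, ‖u k z‖ ≤ ∑ k ∈ Finset.Ico m n, q k :=
          Finset.sum_le_sum fun k _ => hb k z hz
        have e2 : ∑ k ∈ Finset.Ico m n, q k
            = ∑ k ∈ Finset.range n, q k - ∑ k ∈ Finset.range m, q k :=
          Finset.sum_Ico_eq_sub _ hmn
        have e3 : ∑ k ∈ Finset.range N, q k ≤ ∑ k ∈ Finset.range m, q k := by
          apply Finset.sum_le_sum_of_subset_of_nonneg
          · exact Finset.range_subset_range.mpr hNm
          · exact fun k _ _ => hq0 k
        linarith [hsle n]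
      gcongr
    calc ‖∏ k ∈ Finset.range m, (1 - u k z)‖ * ‖(∏ k ∈ Finset.Ico m n, (1 - u k z)) - 1‖
        ≤ Real.exp Q * (Real.exp (Q - ∑ k ∈ Finset.range N, q k) - 1) := by
          apply mul_le_mul h1 h2 (norm_nonneg _)
          positivity
      _ < ε := hN
  refine ⟨N, fun m hm n hn z hz => ?_⟩
  rcases le_total m n with h | h
  · exact key m n hm h z hz
  · rw [dist_comm]; exact key n m hn h z hz

lemma cauchySeq_of_ucso_singleton {F : ℕ → ℂ → ℂ} {z : ℂ}
    (h : UniformCauchySeqOn F atTop {z}) : CauchySeq (fun N => F N z) := by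
  rw [Metric.cauchySeq_iff]
  rw [Metric.uniformCauchySeqOn_iff] at h
  intro ε hε
  obtain ⟨N, hN⟩ := h ε hε
  exact ⟨N, fun m hm n hn => hN m hm n hn z rfl⟩

lemma countable_of_no_accPt {E : Set ℂ} (h : ∀ z ∈ E, ¬AccPt z (𝓟 E)) : E.Countable := by
  have hr : ∀ z ∈ E, ∃ r > 0, ∀ y ∈ E, y ∈ ball z r → y = z := by
    intro z hz
    have := h z hz
    rw [accPt_iff_nhds] at this
    push_neg at this
    obtain ⟨U, hU, hU2⟩ := this
    obtain ⟨r, hr, hball⟩ := Metric.mem_nhds_iff.mp hU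
    exact ⟨r, hr, fun y hy hyb => hU2 y ⟨hball hyb, hy⟩⟩
  choose! r hrpos hrsep using hr
  refine Set.PairwiseDisjoint.countable_of_isOpen (s := fun z => ball z (r z / 3))
    ?_ (fun z _ => isOpen_ball) (fun z hz => ⟨z, mem_ball_self (by linarith [hrpos z hz])⟩)
  intro y hy y' hy' hne
  have h1 : r y ≤ dist y' y := by
    by_contra hlt
    exact hne ((hrsep y hy y' hy' (by rw [mem_ball]; exact not_le.mp hlt)).symm ▸ rfl)
  have h2 : r y' ≤ dist y y' := by
    by_contra hlt
    exact hne.symm ((hrsep y' hy' y hy (by rw [mem_ball]; exact not_le.mp hlt)).symm ▸ rfl)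
  refine Set.disjoint_left.mpr fun x hx hx' => ?_
  rw [mem_ball] at hx hx'
  have := dist_triangle y x y'
  rw [dist_comm x y'] at this
  rw [dist_comm y x] at this
  rw [dist_comm y' y] at h1
  rw [dist_comm y' x] at this
  rcases le_total (r y) (r y') with hc | hc <;> linarith [hrpos y hy, hrpos y' hy']

lemma exists_holo_vanishing {G : Set ℂ} (hG : IsOpen G) (hne : G.Nonempty) {E : Set ℂ}
    (hEG : E ⊆ G) (hacc : ∀ z ∈ G, ¬AccPt z (𝓟 E)) :
    ∃ f : ℂ → ℂ, DifferentiableOn ℂ f G ∧ (∀ z ∈ E, f z = 0) ∧ ∃ p ∈ G, f p ≠ 0 := by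
  obtain ⟨z₁, hz₁⟩ := hne
  have hGinf : G.Infinite := infinite_of_mem_nhds z₁ (hG.mem_nhds hz₁)
  rcases Set.finite_or_infinite E with hfin | hinf
  · obtain ⟨p, hpG, hpE⟩ := (hGinf.diff hfin).nonempty
    refine ⟨fun z => ∏ a ∈ hfin.toFinset, (z - a),
      DifferentiableOn.fun_finset_prod fun a _ => (differentiable_id.sub_const a).differentiableOn,
      ?_, p, hpG, ?_⟩
    · intro z hz
      exact Finset.prod_eq_zero (hfin.mem_toFinset.mpr hz) (sub_self z)
    · rw [Finset.prod_ne_zero_iff]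
      intro a ha
      exact sub_ne_zero.mpr fun h => hpE (h ▸ hfin.mem_toFinset.mp ha)
  · -- infinite case: Weierstrass-type product
    -- Step 1: a point p ∈ G \ E at positive distance ε₀ from E
    have hsep : ∃ p ∈ G, ∃ ε₀ > 0, ∀ y ∈ E, ε₀ ≤ dist y p := by
      have key : ∀ z ∈ G, z ∉ E → ∃ ε₀ > 0, ∀ y ∈ E, ε₀ ≤ dist y z := by
        intro z hz hzE
        have := hacc z hz
        rw [accPt_iff_nhds] at this
        push_neg at this
        obtain ⟨U, hU, hU2⟩ := this
        obtain ⟨r, hr, hball⟩ := Metric.mem_nhds_iff.mp hU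
        refine ⟨r, hr, fun y hy => ?_⟩
        by_contra hlt
        push_neg at hlt
        exact hzE ((hU2 y ⟨hball hlt, hy⟩) ▸ hy)
      by_cases hz₁E : z₁ ∈ E
      · have := hacc z₁ hz₁
        rw [accPt_iff_nhds] at this
        push_neg at this
        obtain ⟨U, hU, hU2⟩ := this
        obtain ⟨r, hr, hball⟩ := Metric.mem_nhds_iff.mp hU
        obtain ⟨r', hr', hball'⟩ := Metric.isOpen_iff.mp hG z₁ hz₁
        set ρ := min r r' with hρ
        have hρpos : 0 < ρ := lt_min hr hr'
        set p := z₁ + (ρ/2 : ℝ) with hpdef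
        have hpne : p ≠ z₁ := by
          simp only [hpdef, ne_eq, add_eq_left]
          exact_mod_cast (by positivity : (0:ℝ) < ρ/2).ne'
        have hpball : p ∈ ball z₁ ρ := by
          simp only [hpdef, mem_ball, dist_eq_norm, add_sub_cancel_left]
          rw [Complex.norm_real, Real.norm_eq_abs, abs_of_pos (by positivity)]
          linarith
        · have hpG : p ∈ G := hball' (mem_of_mem_of_subset hpball (ball_subset_ball (min_le_right _ _)))
          have hpE : p ∉ E := fun hpEmem =>
            hpne (hU2 p ⟨hball (mem_of_mem_of_subset hpball (ball_subset_ball (min_le_left _ _))), hpEmem⟩)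
          obtain ⟨ε₀, hε₀, hsep⟩ := key p hpG hpE
          exact ⟨p, hpG, ε₀, hε₀, hsep⟩
      · obtain ⟨ε₀, hε₀, hs⟩ := key z₁ hz₁ hz₁E
        exact ⟨z₁, hz₁, ε₀, hε₀, hs⟩
    obtain ⟨p, hpG, ε₀, hε₀, hsepE⟩ := hsep
    have hpE : p ∉ E := fun hp => by have := hsepE p hp; simp at this; linarith
    have hEp : ∀ w ∈ E, w ≠ p := fun w hw h => by
      have := hsepE w hw; rw [h] at this; simp at this; linarith
    set R := ε₀⁻¹ with hR
    have hRpos : 0 < R := by positivity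
    set φ : ℂ → ℂ := fun w => (w - p)⁻¹ with hφ
    set Ω : Set ℂ := {ζ : ℂ | ζ ≠ 0 ∧ p + ζ⁻¹ ∈ G} with hΩ
    have hφmem : ∀ w ∈ E, φ w ∈ Ω := by
      intro w hw
      have hwp : w - p ≠ 0 := sub_ne_zero.mpr (hEp w hw)
      refine ⟨inv_ne_zero hwp, ?_⟩
      have : p + ((w - p)⁻¹)⁻¹ = w := by rw [inv_inv]; ring
      simp only [hφ]
      rw [this]
      exact hEG hw
    have hψφ : ∀ w ∈ E, p + (φ w)⁻¹ = w := by
      intro w hw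
      simp only [hφ, inv_inv]
      ring
    have hΩopen : IsOpen Ω := by
      have hcont : ContinuousOn (fun ζ : ℂ => p + ζ⁻¹) {ζ : ℂ | ζ ≠ 0} :=
        continuousOn_const.add (continuousOn_id.inv₀ fun ζ hζ => hζ)
      have h1 := hcont.isOpen_inter_preimage isOpen_ne hG
      have h2 : Ω = {ζ : ℂ | ζ ≠ 0} ∩ (fun ζ : ℂ => p + ζ⁻¹) ⁻¹' G := by
        ext ζ; simp [hΩ, Set.mem_setOf_eq]
      rw [h2]; exact h1
    set A : Set ℂ := φ '' E with hA
    have hAsub : A ⊆ Ω := by rintro ζ ⟨w, hw, rfl⟩; exact hφmem w hw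
    have hφinj : Set.InjOn φ E := by
      intro w hw w' hw' h
      have h1 : w - p ≠ 0 := sub_ne_zero.mpr (hEp w hw)
      have h2 : w' - p ≠ 0 := sub_ne_zero.mpr (hEp w' hw')
      have := inv_injective h
      have : w - p = w' - p := this
      linear_combination this
    have hAcount : A.Countable :=
      (countable_of_no_accPt fun z hz => hacc z (hEG hz)).image φ
    have hAinf : A.Infinite := hinf.image hφinj
    -- enumerate A
    haveI := hAcount.to_subtype
    haveI : Infinite ↥A := hAinf.to_subtype
    obtain ⟨den⟩ := nonempty_denumerable ↥A
    haveI := den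
    set e := Denumerable.eqv ↥A with he
    set a : ℕ → ℂ := fun n => ((e.symm n : ↥A) : ℂ) with ha
    have haA : ∀ n, a n ∈ A := fun n => (e.symm n).2
    have hainj : Function.Injective a := fun m n h =>
      e.symm.injective (Subtype.ext h)
    have hasurj : ∀ ζ ∈ A, ∃ n, a n = ζ := fun ζ hζ =>
      ⟨e ⟨ζ, hζ⟩, by simp [ha]⟩
    -- the complement F and nearest points b
    set Fc : Set ℂ := Ωᶜ with hFc
    have hFclosed : IsClosed Fc := hΩopen.isClosed_compl
    have h0F : (0 : ℂ) ∈ Fc := fun h => h.1 rfl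
    have hFne : Fc.Nonempty := ⟨0, h0F⟩
    have hbex : ∀ n, ∃ y ∈ Fc, infDist (a n) Fc = dist (a n) y := fun n =>
      hFclosed.exists_infDist_eq_dist hFne (a n)
    choose b hbF hbd using hbex
    set δ : ℕ → ℝ := fun n => infDist (a n) Fc with hδ
    have hδpos : ∀ n, 0 < δ n := by
      intro n
      rw [hδ]
      rw [← hFclosed.notMem_iff_infDist_pos hFne]
      exact fun h => h (hAsub (haA n))
    have hanorm : ∀ n, ‖a n‖ ≤ R := by
      intro n
      obtain ⟨w, hw, hwe⟩ := haA n
      rw [← hwe]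
      have h1 : ε₀ ≤ ‖w - p‖ := by
        have := hsepE w hw
        rwa [dist_eq_norm] at this
      simp only [hφ, norm_inv]
      rw [hR]
      exact inv_anti₀ hε₀ h1
    have hδle : ∀ n, δ n ≤ R := by
      intro n
      refine le_trans ?_ (hanorm n)
      have := infDist_le_dist_of_mem (x := a n) h0F
      rwa [dist_zero_right] at this
    have hbnorm : ∀ n, ‖b n‖ ≤ 2 * R := by
      intro n
      have h1 : ‖b n‖ ≤ ‖a n‖ + dist (a n) (b n) := by
        rw [dist_eq_norm]
        calc ‖b n‖ = ‖a n - (a n - b n)‖ := by ring_nf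
          _ ≤ ‖a n‖ + ‖a n - b n‖ := norm_sub_le _ _
      have h2 : dist (a n) (b n) = δ n := (hbd n).symm
      linarith [hδle n, hanorm n]
    -- Step: delta n -> 0
    have hδ0 : Tendsto δ atTop (𝓝 0) := by
      rw [Metric.tendsto_atTop]
      intro c hc
      have hfin : {n : ℕ | c ≤ δ n}.Finite := by
        by_contra hSinf
        rw [Set.not_infinite.symm, not_not] at hSinf
        set T : Set ℂ := a '' {n : ℕ | c ≤ δ n} with hT
        have hTinf : T.Infinite := hSinf.image hainj.injOn
        set Kc : Set ℂ := {ζ : ℂ | ‖ζ‖ ≤ R ∧ c ≤ infDist ζ Fc} with hKc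
        have hKcc : IsCompact Kc := by
          have hcl : IsClosed Kc := by
            rw [hKc, Set.setOf_and]
            exact (isClosed_le continuous_norm continuous_const).inter
              (isClosed_le continuous_const (continuous_infDist_pt Fc))
          exact (isCompact_closedBall (0:ℂ) R).of_isClosed_subset hcl
            fun ζ hζ => by simpa [mem_closedBall, dist_zero_right] using hζ.1
        have hTsub : T ⊆ Kc := by
          rintro ζ ⟨n, hn, rfl⟩
          exact ⟨hanorm n, hn⟩
        obtain ⟨ζ₀, hζ₀K, hacc'⟩ := hTinf.exists_accPt_of_subset_isCompact hKcc hTsub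
        have haccA : AccPt ζ₀ (𝓟 A) :=
          hacc'.mono (principal_mono.mpr (by rintro ζ ⟨n, _, rfl⟩; exact haA n))
        have hζ₀Ω : ζ₀ ∈ Ω := by
          by_contra hno
          have h0 : infDist ζ₀ Fc = 0 := infDist_zero_of_mem hno
          have h2 := hζ₀K.2
          rw [h0] at h2
          linarith
        have hζ₀0 : ζ₀ ≠ 0 := hζ₀Ω.1
        set z₀ : ℂ := p + ζ₀⁻¹ with hz₀
        have hz₀G : z₀ ∈ G := hζ₀Ω.2
        refine hacc z₀ hz₀G ?_
        set ψ : ℂ → ℂ := fun ζ => p + ζ⁻¹ with hψ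
        have hmap : Tendsto ψ (𝓝[≠] ζ₀ ⊓ 𝓟 A) (𝓝[≠] z₀ ⊓ 𝓟 E) := by
          rw [tendsto_inf]
          constructor
          · rw [tendsto_nhdsWithin_iff]
            constructor
            · have hcont : ContinuousAt ψ ζ₀ :=
                continuousAt_const.add (continuousAt_id.inv₀ hζ₀0)
              exact hcont.tendsto.mono_left (le_trans inf_le_left nhdsWithin_le_nhds)
            · have h1 : ∀ᶠ ζ in 𝓝[≠] ζ₀ ⊓ 𝓟 A, ζ ≠ ζ₀ :=
                eventually_inf_principal.mpr <| by
                  filter_upwards [self_mem_nhdsWithin] with ζ hζ _ using hζ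
              have h2 : ∀ᶠ ζ in 𝓝[≠] ζ₀ ⊓ 𝓟 A, ζ ∈ A :=
                eventually_inf_principal.mpr (Eventually.of_forall fun ζ h => h)
              filter_upwards [h1, h2] with ζ hζne hζA
              intro hcontra
              have hζ0 : ζ ≠ 0 := (hAsub hζA).1
              apply hζne
              have hinv : ζ⁻¹ = ζ₀⁻¹ := by
                have h3 : p + ζ⁻¹ = p + ζ₀⁻¹ := hcontra
                linear_combination h3
              exact inv_injective hinv
          · rw [tendsto_principal]
            have h2 : ∀ᶠ ζ in 𝓝[≠] ζ₀ ⊓ 𝓟 A, ζ ∈ A :=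
              eventually_inf_principal.mpr (Eventually.of_forall fun ζ h => h)
            filter_upwards [h2] with ζ hζA
            obtain ⟨w, hw, rfl⟩ := hζA
            show p + (φ w)⁻¹ ∈ E
            rw [hψφ w hw]
            exact hw
        have hsrc : NeBot (𝓝[≠] ζ₀ ⊓ 𝓟 A) := haccA
        exact (hsrc.map ψ).mono hmap
      obtain ⟨N, hN⟩ := hfin.bddAbove
      refine ⟨N + 1, fun n hn => ?_⟩
      rw [Real.dist_eq, sub_zero, abs_of_pos (hδpos n)]
      by_contra hle
      push_neg at hle
      have : n ≤ N := hN (Set.mem_setOf_eq ▸ hle)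
      omega
    -- the Blaschke-type factors
    set W : ℕ → ℂ → ℂ := fun n z => ((a n - b n) * (z - p)) / (1 - b n * (z - p)) with hW
    have hWdenom : ∀ n, ∀ z ∈ G, 1 - b n * (z - p) ≠ 0 := by
      intro n z hz hzero
      have hbne : b n ≠ 0 := by
        intro h0
        rw [h0] at hzero
        simp at hzero
      have hzp : z - p = (b n)⁻¹ := by
        field_simp
        linear_combination -hzero
      have : b n ∈ Ω := by
        refine ⟨hbne, ?_⟩
        rw [← hzp]
        have : p + (z - p) = z := by ring
        rw [this]
        exact hz
      exact (hbF n) this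
    have hWdiff : ∀ n, DifferentiableOn ℂ (W n) G := by
      intro n
      apply DifferentiableOn.div
      · exact (differentiable_const _).differentiableOn.mul
          ((differentiable_id.sub_const p).differentiableOn)
      · exact ((differentiable_const (1:ℂ)).sub
          ((differentiable_id.sub_const p).const_mul (b n))).differentiableOn
      · exact hWdenom n
    have hWp : ∀ n, W n p = 0 := by
      intro n
      simp [hW]
    -- norm formula for W away from p
    have hWnorm : ∀ n, ∀ z ∈ G, z ≠ p → W n z = (a n - b n) / (φ z - b n) := by
      intro n z hz hzp
      have hzp' : z - p ≠ 0 := sub_ne_zero.mpr hzp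
      have hden : 1 - b n * (z - p) ≠ 0 := hWdenom n z hz
      have hφb : φ z - b n ≠ 0 := by
        intro h0
        have hφz : φ z ∈ Ω := by
          refine ⟨inv_ne_zero hzp', ?_⟩
          simp only [hφ, inv_inv]
          have : p + (z - p) = z := by ring
          rw [this]
          exact hz
        have : b n ∈ Ω := by rwa [← sub_eq_zero.mp h0]
        exact (hbF n) this
      rw [hW, div_eq_div_iff hden hφb]
      simp only [hφ]
      field_simp
    have hWnormval : ∀ n, ∀ z ∈ G, z ≠ p → ‖W n z‖ = δ n / ‖φ z - b n‖ := by
      intro n z hz hzp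
      rw [hWnorm n z hz hzp, norm_div]
      congr 1
      rw [hδ]
      simp only
      rw [hbd n, dist_eq_norm]
    -- bound on compact sets
    have hKbound : ∀ K : Set ℂ, K ⊆ G → IsCompact K →
        ∃ c > 0, ∀ n, ∀ z ∈ K, ‖W n z‖ ≤ δ n / c := by
      intro K hKG hKcpt
      -- bound K
      obtain ⟨r, hr⟩ := hKcpt.isBounded.subset_closedBall p
      set M : ℝ := max r 1 with hM
      have hMpos : 0 < M := lt_of_lt_of_le one_pos (le_max_right _ _)
      have hMb : ∀ w ∈ K, ‖w - p‖ ≤ M := by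
        intro w hw
        have := hr hw
        rw [mem_closedBall, dist_eq_norm] at this
        exact this.trans (le_max_left _ _)
      set ψ : ℂ → ℂ := fun ζ => p + ζ⁻¹ with hψ
      set K2 : Set ℂ := ({ζ : ℂ | M⁻¹ ≤ ‖ζ‖} ∩ ψ ⁻¹' K) ∩ {ζ : ℂ | ‖ζ‖ ≤ 3 * R + 1} with hK2
      have hK2closed : IsClosed K2 := by
        refine IsClosed.inter ?_ (isClosed_le continuous_norm continuous_const)
        refine ContinuousOn.preimage_isClosed_of_isClosed ?_
          (isClosed_le continuous_const continuous_norm) hKcpt.isClosed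
        intro ζ hζ
        have hζ0 : ζ ≠ 0 := by
          intro h0
          rw [h0] at hζ
          simp only [Set.mem_setOf_eq, norm_zero] at hζ
          have : (0:ℝ) < M⁻¹ := by positivity
          linarith
        exact (continuousAt_const.add (continuousAt_id.inv₀ hζ0)).continuousWithinAt
      have hK2cpt : IsCompact K2 := by
        refine (isCompact_closedBall (0:ℂ) (3 * R + 1)).of_isClosed_subset hK2closed ?_
        intro ζ hζ
        rw [mem_closedBall, dist_zero_right]
        exact hζ.2
      have hK2Ω : K2 ⊆ Ω := by
        rintro ζ ⟨⟨h1, h2⟩, _⟩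
        have hζ0 : ζ ≠ 0 := by
          intro h0
          rw [h0] at h1
          simp only [Set.mem_setOf_eq, norm_zero] at h1
          have : (0:ℝ) < M⁻¹ := by positivity
          linarith
        exact ⟨hζ0, hKG h2⟩
      obtain ⟨d, hdpos, hd⟩ : ∃ d > 0, ∀ ζ ∈ K2, d ≤ infDist ζ Fc := by
        rcases K2.eq_empty_or_nonempty with hempty | hne2
        · exact ⟨1, one_pos, fun ζ hζ => absurd hζ (by rw [hempty]; exact notMem_empty ζ)⟩
        · obtain ⟨ζs, hζs, hmin⟩ := hK2cpt.exists_isMinOn hne2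
            (continuous_infDist_pt Fc).continuousOn
          refine ⟨infDist ζs Fc, ?_, fun ζ hζ => hmin hζ⟩
          show 0 < infDist ζs Fc
          rw [← hFclosed.notMem_iff_infDist_pos hFne]
          exact fun h => h (hK2Ω hζs)
      refine ⟨min d 1, lt_min hdpos one_pos, fun n z hz => ?_⟩
      by_cases hzp : z = p
      · subst hzp
        rw [hWp n, norm_zero]
        exact div_nonneg (le_of_lt (hδpos n)) (le_of_lt (lt_min hdpos one_pos))
      · rw [hWnormval n z (hKG hz) hzp]
        have hzp' : z - p ≠ 0 := sub_ne_zero.mpr hzp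
        have hkey : min d 1 ≤ ‖φ z - b n‖ := by
          have hψz : ψ (φ z) = z := by
            simp only [hψ, hφ, inv_inv]
            ring
          by_cases hval : ‖φ z‖ ≤ 3 * R + 1
          · have hζK2 : φ z ∈ K2 := by
              refine ⟨⟨?_, ?_⟩, hval⟩
              · simp only [Set.mem_setOf_eq, hφ, norm_inv]
                exact inv_anti₀ (norm_pos_iff.mpr hzp') (hMb z hz)
              · rw [Set.mem_preimage, hψz]; exact hz
            have h1 : d ≤ infDist (φ z) Fc := hd _ hζK2
            have h2 : infDist (φ z) Fc ≤ dist (φ z) (b n) := infDist_le_dist_of_mem (hbF n)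
            rw [dist_eq_norm] at h2
            exact le_trans (min_le_left _ _) (h1.trans h2)
          · push_neg at hval
            have h1 : ‖φ z‖ - ‖b n‖ ≤ ‖φ z - b n‖ := norm_sub_norm_le _ _
            have h2 := hbnorm n
            have h3 : min d 1 ≤ 1 := min_le_right _ _
            linarith
        exact div_le_div_of_nonneg_left (le_of_lt (hδpos n)) (lt_min hdpos one_pos) hkey
    -- the infinite product
    set u : ℕ → ℂ → ℂ := fun n z => (W n z) ^ (n + 1) with hu
    set P : ℕ → ℂ → ℂ := fun N z => ∏ n ∈ Finset.range N, (1 - u n z) with hP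
    have hUCSO : ∀ K : Set ℂ, K ⊆ G → IsCompact K → UniformCauchySeqOn P atTop K := by
      intro K hKG hKcpt
      obtain ⟨c, hcpos, hc⟩ := hKbound K hKG hKcpt
      set q : ℕ → ℝ := fun n => (δ n / c) ^ (n + 1) with hq
      have hq0 : ∀ n, 0 ≤ q n := fun n => pow_nonneg (div_nonneg (hδpos n).le hcpos.le) _
      have hqsum : Summable q := by
        rw [Metric.tendsto_atTop] at hδ0
        obtain ⟨N, hN⟩ := hδ0 (c / 2) (by positivity)
        have hhalf : ∀ n, N ≤ n → δ n / c ≤ 1 / 2 := by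
          intro n hn
          have := hN n hn
          rw [Real.dist_eq, sub_zero, abs_of_pos (hδpos n)] at this
          rw [div_le_div_iff₀ hcpos two_pos]
          linarith
        rw [← summable_nat_add_iff N]
        refine Summable.of_nonneg_of_le (fun n => hq0 (n + N))
          (fun n => ?_) summable_geometric_two
        show (δ (n + N) / c) ^ (n + N + 1) ≤ (1 / 2 : ℝ) ^ n
        calc (δ (n + N) / c) ^ (n + N + 1) ≤ (1 / 2 : ℝ) ^ (n + N + 1) := by
              refine pow_le_pow_left₀ (div_nonneg (hδpos _).le hcpos.le) ?_ _
              exact hhalf (n + N) (by omega)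
          _ ≤ (1 / 2 : ℝ) ^ n :=
              pow_le_pow_of_le_one (by norm_num) (by norm_num) (by omega)
      refine uniformCauchy_prod_one_sub hqsum hq0 fun n z hz => ?_
      show ‖(W n z) ^ (n + 1)‖ ≤ (δ n / c) ^ (n + 1)
      rw [norm_pow]
      exact pow_le_pow_left₀ (norm_nonneg _) (hc n z hz) _
    have hcauchy : ∀ z ∈ G, CauchySeq (fun N => P N z) := fun z hz =>
      cauchySeq_of_ucso_singleton (hUCSO {z} (Set.singleton_subset_iff.mpr hz)
        isCompact_singleton)
    set f : ℂ → ℂ := fun z => limUnder atTop (fun N => P N z) with hf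
    have hflim : ∀ z ∈ G, Tendsto (fun N => P N z) atTop (𝓝 (f z)) := fun z hz =>
      (hcauchy z hz).tendsto_limUnder
    have hTLU : TendstoLocallyUniformlyOn P f atTop G := by
      rw [tendstoLocallyUniformlyOn_iff_forall_isCompact hG]
      intro K hKG hKcpt
      exact (hUCSO K hKG hKcpt).tendstoUniformlyOn_of_tendsto fun z hz => hflim z (hKG hz)
    have hPdiff : ∀ N, DifferentiableOn ℂ (P N) G := by
      intro N
      apply DifferentiableOn.fun_finset_prod
      intro n _
      exact ((differentiable_const (1:ℂ)).differentiableOn).sub ((hWdiff n).pow _)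
    have hfdiff : DifferentiableOn ℂ f G :=
      hTLU.differentiableOn (Eventually.of_forall hPdiff) hG
    refine ⟨f, hfdiff, ?_, p, hpG, ?_⟩
    · intro w hw
      obtain ⟨m, hm⟩ := hasurj (φ w) ⟨w, hw, rfl⟩
      have hwp : w - p ≠ 0 := sub_ne_zero.mpr (hEp w hw)
      have hW1 : W m w = 1 := by
        have hden : 1 - b m * (w - p) ≠ 0 := hWdenom m w (hEG hw)
        have ham : a m = (w - p)⁻¹ := by rw [hm]
        show (a m - b m) * (w - p) / (1 - b m * (w - p)) = 1
        rw [div_eq_one_iff_eq hden, ham]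
        field_simp
      have hPzero : ∀ N, m + 1 ≤ N → P N w = 0 := by
        intro N hN
        apply Finset.prod_eq_zero (Finset.mem_range.mpr (by omega : m < N))
        show (1 : ℂ) - (W m w) ^ (m + 1) = 0
        rw [hW1]
        simp
      have hzero : Tendsto (fun N => P N w) atTop (𝓝 0) := by
        refine tendsto_const_nhds.congr' ?_
        filter_upwards [eventually_ge_atTop (m + 1)] with N hN
        exact (hPzero N hN).symm
      exact tendsto_nhds_unique (hflim w (hEG hw)) hzero
    · have hP1 : ∀ N, P N p = 1 := by
        intro N
        apply Finset.prod_eq_one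
        intro n _
        show (1 : ℂ) - (W n p) ^ (n + 1) = 1
        rw [hWp n]
        simp
      have hone : Tendsto (fun N => P N p) atTop (𝓝 1) := by
        simp only [hP1]
        exact tendsto_const_nhds
      rw [tendsto_nhds_unique (hflim p hpG) hone]
      exact one_ne_zero

theorem stmt0' (G : Set ℂ) (v : ℂ → ℝ) (hG : IsOpen G) (hGc : IsConnected G)
    (hv : ∀ z ∈ G, 0 ≤ v z) :
    (∀ f : ℂ → ℂ, (DifferentiableOn ℂ f G ∧ ∃ C : ℝ, ∀ z ∈ G, v z * ‖f z‖ ≤ C) →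
      (∀ z ∈ G, v z * ‖f z‖ = 0) → ∀ z ∈ G, f z = 0) ↔
      ∃ z ∈ G, AccPt z (𝓟 {w ∈ G | 0 < v w}) := by
  constructor
  · intro hnorm
    by_contra hno
    push_neg at hno
    obtain ⟨f, hfdiff, hfzero, p, hpG, hfp⟩ :=
      exists_holo_vanishing hG hGc.nonempty (fun w hw => hw.1) hno
    have hvf : ∀ z ∈ G, v z * ‖f z‖ = 0 := by
      intro z hz
      rcases (hv z hz).lt_or_eq with hvz | hvz
      · rw [hfzero z ⟨hz, hvz⟩]
        simp
      · rw [← hvz, zero_mul]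
    exact hfp (hnorm f ⟨hfdiff, 0, fun z hz => le_of_eq (hvf z hz)⟩ hvf p hpG)
  · rintro ⟨z₀, hz₀G, hacc⟩ f ⟨hfdiff, -⟩ hzero z hz
    have hfE : ∀ w ∈ {w ∈ G | 0 < v w}, f w = 0 := by
      intro w hw
      have h := hzero w hw.1
      rcases mul_eq_zero.mp h with h' | h'
      · exact absurd h' (ne_of_gt hw.2)
      · exact norm_eq_zero.mp h'
    have hana : AnalyticOnNhd ℂ f G := hfdiff.analyticOnNhd hG
    have hfreq : ∃ᶠ w in 𝓝[≠] z₀, f w = 0 := by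
      rw [accPt_iff_frequently] at hacc
      have : ∃ᶠ w in 𝓝[≠] z₀, w ∈ {w ∈ G | 0 < v w} :=
        frequently_nhdsWithin_iff.mpr (hacc.mono fun y hy => ⟨hy.2, hy.1⟩)
      exact this.mono fun w hw => hfE w hw
    exact hana.eqOn_zero_of_preconnected_of_frequently_eq_zero hGc.isPreconnected hz₀G hfreq hz

theorem stmt0 (G : Set ℂ) (v : ℂ → ℝ) (hG : IsOpen G) (hGc : IsConnected G)
    (hv : ∀ z ∈ G, 0 ≤ v z) :
    HvNormed G v ↔ ∃ z ∈ G, AccPt z (𝓟 {w ∈ G | 0 < v w}) := by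
  unfold HvNormed MemHv
  exact stmt0' G v hG hGc hv
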